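/- Let c > 1 and let X be a c-discrete self-similar fractal generated by V with (0,0) ∈ V and |V| ≥ 2. Then the zeta-dimension of X equals log|V| / log c. -/

import Mathlib

open Filter

/-- Stages of the `c`-discrete self-similar fractal generated by `V`. -/
def stage (c : ℤ) (V : Set (ℤ × ℤ)) : ℕ → Set (ℤ × ℤ)
  | 0 => {(0, 0)}
  | i + 1 =>
    stage c V i ∪
      {p | ∃ x ∈ stage c V i, ∃ v ∈ V, p = (x.1 + c ^ i * v.1, x.2 + c ^ i * v.2)}

/-- `A_{≤n} = {(k,l) ∈ A : |k|+|l| ≤ n}`. -/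
def ballSet (A : Set (ℤ × ℤ)) (n : ℕ) : Set (ℤ × ℤ) :=
  {p ∈ A | p.1.natAbs + p.2.natAbs ≤ n}

/-- Zeta-dimension via its entropy characterization (logs base 2). -/
noncomputable def zetaDim (A : Set (ℤ × ℤ)) : ℝ :=
  Filter.limsup (fun n : ℕ => Real.logb 2 ((ballSet A n).ncard) / Real.logb 2 n)
    Filter.atTop


lemma digit_unique {D a a' b b' : ℤ} (hD : 0 < D) (h0 : 0 ≤ a) (h1 : a < D)
    (h2 : 0 ≤ a') (h3 : a' < D) (h : a + D * b = a' + D * b') : a = a' ∧ b = b' := by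
  have e1 : (a + D * b) / D = b := by
    rw [Int.add_mul_ediv_left a b hD.ne', Int.ediv_eq_zero_of_lt h0 h1, zero_add]
  have e2 : (a' + D * b') / D = b' := by
    rw [Int.add_mul_ediv_left a' b' hD.ne', Int.ediv_eq_zero_of_lt h2 h3, zero_add]
  have hb : b = b' := by rw [← e1, ← e2, h]
  subst hb
  exact ⟨by linarith, rfl⟩

lemma ncard_prod (s t : Set (ℤ × ℤ)) : (s ×ˢ t).ncard = s.ncard * t.ncard := by
  rw [← Nat.card_coe_set_eq, ← Nat.card_coe_set_eq, ← Nat.card_coe_set_eq,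
    Nat.card_congr (Equiv.Set.prod s t), Nat.card_prod]

section
variable (c : ℤ) (V : Set (ℤ × ℤ))

lemma zero_mem_stage : ∀ i, ((0, 0) : ℤ × ℤ) ∈ stage c V i
  | 0 => rfl
  | i + 1 => Or.inl (zero_mem_stage i)

lemma stage_mono {i j : ℕ} (h : i ≤ j) : stage c V i ⊆ stage c V j := by
  induction j with
  | zero => simpa [Nat.le_zero.mp h]
  | succ j ih =>
    rcases Nat.lt_or_ge i (j+1) with h' | h'
    · exact (ih (by omega)).trans (by intro p hp; exact Or.inl hp)
    · have : i = j + 1 := by omega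
      subst this; exact subset_rfl

variable (hc : 1 < c) (hV : V ⊆ Set.Icc (0 : ℤ) (c - 1) ×ˢ Set.Icc (0 : ℤ) (c - 1))
    (h0 : ((0, 0) : ℤ × ℤ) ∈ V)

include hc hV in
lemma stage_box : ∀ i, ∀ p ∈ stage c V i,
    0 ≤ p.1 ∧ p.1 < c ^ i ∧ 0 ≤ p.2 ∧ p.2 < c ^ i := by
  intro i
  induction i with
  | zero =>
    intro p hp
    have : p = ((0 : ℤ), (0 : ℤ)) := hp
    subst this; norm_num
  | succ i ih =>
    intro p hp
    have hpow : (0:ℤ) < c ^ i := pow_pos (by omega) i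
    have hple : c ^ i ≤ c ^ (i+1) := pow_le_pow_right₀ (by omega) (by omega)
    have hps : c ^ (i+1) = c ^ i * c := pow_succ c i
    rcases hp with hp | ⟨x, hx, v, hv, rfl⟩
    · obtain ⟨a1, a2, a3, a4⟩ := ih p hp
      exact ⟨a1, by nlinarith, a3, by nlinarith⟩
    · obtain ⟨a1, a2, a3, a4⟩ := ih x hx
      obtain ⟨⟨b1, b2⟩, b3, b4⟩ := hV hv
      have m1 : 0 ≤ c ^ i * v.1 := mul_nonneg hpow.le b1
      have m2 : 0 ≤ c ^ i * v.2 := mul_nonneg hpow.le b3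
      have m3 : c ^ i * v.1 ≤ c ^ i * (c - 1) := mul_le_mul_of_nonneg_left b2 hpow.le
      have m4 : c ^ i * v.2 ≤ c ^ i * (c - 1) := mul_le_mul_of_nonneg_left b4 hpow.le
      exact ⟨by simp only; linarith, by simp only; nlinarith, by simp only; linarith,
        by simp only; nlinarith⟩

include h0 in
lemma stage_eq_image (i : ℕ) :
    stage c V (i+1) = (fun q : (ℤ × ℤ) × (ℤ × ℤ) =>
      (q.1.1 + c ^ i * q.2.1, q.1.2 + c ^ i * q.2.2)) '' (stage c V i ×ˢ V) := by
  ext p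
  constructor
  · rintro (hp | ⟨x, hx, v, hv, rfl⟩)
    · exact ⟨(p, (0, 0)), ⟨hp, h0⟩, by simp⟩
    · exact ⟨(x, v), ⟨hx, hv⟩, rfl⟩
  · rintro ⟨⟨x, v⟩, ⟨hx, hv⟩, rfl⟩
    exact Or.inr ⟨x, hx, v, hv, rfl⟩

include hc hV in
lemma map_injOn (i : ℕ) :
    Set.InjOn (fun q : (ℤ × ℤ) × (ℤ × ℤ) =>
      (q.1.1 + c ^ i * q.2.1, q.1.2 + c ^ i * q.2.2)) (stage c V i ×ˢ V) := by
  rintro ⟨x, v⟩ ⟨hx, hv⟩ ⟨x', v'⟩ ⟨hx', hv'⟩ heq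
  have hpow : (0:ℤ) < c ^ i := pow_pos (by omega) i
  obtain ⟨a1, a2, a3, a4⟩ := stage_box c V hc hV i x hx
  obtain ⟨a1', a2', a3', a4'⟩ := stage_box c V hc hV i x' hx'
  have e1 : x.1 + c ^ i * v.1 = x'.1 + c ^ i * v'.1 := congrArg Prod.fst heq
  have e2 : x.2 + c ^ i * v.2 = x'.2 + c ^ i * v'.2 := congrArg Prod.snd heq
  obtain ⟨f1, f2⟩ := digit_unique hpow a1 a2 a1' a2' e1
  obtain ⟨g1, g2⟩ := digit_unique hpow a3 a4 a3' a4' e2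
  simp only [Prod.mk.injEq]
  exact ⟨Prod.ext f1 g1, Prod.ext f2 g2⟩

include hV in
lemma V_finite : V.Finite :=
  ((Set.finite_Icc (0:ℤ) (c-1)).prod (Set.finite_Icc 0 (c-1))).subset hV

include hV h0 in
lemma stage_finite : ∀ i, (stage c V i).Finite
  | 0 => Set.finite_singleton _
  | i + 1 => by
    rw [stage_eq_image c V h0 i]
    exact ((stage_finite i).prod (V_finite c V hV)).image _

include hc hV h0 in
lemma stage_ncard : ∀ i, (stage c V i).ncard = V.ncard ^ i
  | 0 => by simp [stage]
  | i + 1 => by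
    rw [stage_eq_image c V h0 i, Set.ncard_image_of_injOn (map_injOn c V hc hV i),
      ncard_prod, stage_ncard i, pow_succ]

end

section
variable (c : ℤ) (V : Set (ℤ × ℤ))
variable (hc : 1 < c) (hV : V ⊆ Set.Icc (0 : ℤ) (c - 1) ×ˢ Set.Icc (0 : ℤ) (c - 1))
    (h0 : ((0, 0) : ℤ × ℤ) ∈ V)

include hc hV in
lemma stage_subset_ball {i n : ℕ} (h : 2 * c ^ i ≤ (n : ℤ) + 2) :
    stage c V i ⊆ ballSet (⋃ j, stage c V j) n := by
  intro p hp
  obtain ⟨a1, a2, a3, a4⟩ := stage_box c V hc hV i p hp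
  refine ⟨Set.mem_iUnion.mpr ⟨i, hp⟩, ?_⟩
  have : (p.1.natAbs : ℤ) + (p.2.natAbs : ℤ) ≤ (n : ℤ) := by omega
  exact_mod_cast this

include hc hV in
lemma ball_subset_stage {i n : ℕ} (h : (n : ℤ) < c ^ i) :
    ballSet (⋃ j, stage c V j) n ⊆ stage c V i := by
  rintro p ⟨hpX, hpn⟩
  obtain ⟨j, hj⟩ := Set.mem_iUnion.mp hpX
  clear hpX
  induction j generalizing p with
  | zero =>
    have : p = ((0 : ℤ), (0 : ℤ)) := hj
    subst this
    exact zero_mem_stage c V i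
  | succ j ih =>
    rcases hj with hj | ⟨x, hx, v, hv, rfl⟩
    · exact ih hpn hj
    · by_cases hv0 : v = (0, 0)
      · subst hv0
        simp only [mul_zero, add_zero] at hpn ⊢
        exact ih hpn hx
      · rcases Nat.lt_or_ge j i with hji | hji
        · exact stage_mono c V hji (Or.inr ⟨x, hx, v, hv, rfl⟩)
        · exfalso
          obtain ⟨a1, a2, a3, a4⟩ := stage_box c V hc hV j x hx
          obtain ⟨⟨b1, b2⟩, b3, b4⟩ := hV hv
          have hvne : v.1 ≠ 0 ∨ v.2 ≠ 0 := by
            by_contra h'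
            push_neg at h'
            exact hv0 (Prod.ext h'.1 h'.2)
          have hvpos : 1 ≤ v.1 + v.2 := by omega
          have hpow : (0:ℤ) ≤ c ^ j := pow_nonneg (by omega) j
          have hcij : c ^ i ≤ c ^ j := pow_le_pow_right₀ (by omega) hji
          have hm : c ^ j ≤ c ^ j * v.1 + c ^ j * v.2 := by nlinarith
          have m1 : 0 ≤ c ^ j * v.1 := mul_nonneg hpow b1
          have m2 : 0 ≤ c ^ j * v.2 := mul_nonneg hpow b3
          have hpn' : x.1 + c ^ j * v.1 + (x.2 + c ^ j * v.2) ≤ (n : ℤ) := by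
            have e1 : ((x.1 + c ^ j * v.1).natAbs : ℤ) = x.1 + c ^ j * v.1 :=
              Int.natAbs_of_nonneg (by linarith)
            have e2 : ((x.2 + c ^ j * v.2).natAbs : ℤ) = x.2 + c ^ j * v.2 :=
              Int.natAbs_of_nonneg (by linarith)
            have := hpn
            simp only [Prod.fst, Prod.snd] at this ⊢
            omega
          linarith

end

section
variable (c : ℤ) (V : Set (ℤ × ℤ))
variable (hc : 1 < c) (hV : V ⊆ Set.Icc (0 : ℤ) (c - 1) ×ˢ Set.Icc (0 : ℤ) (c - 1))
    (h0 : ((0, 0) : ℤ × ℤ) ∈ V)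

include hc hV h0 in
lemma ball_finite (n : ℕ) : (ballSet (⋃ j, stage c V j) n).Finite := by
  refine (stage_finite c V hV h0 (n+1)).subset (ball_subset_stage c V hc hV ?_)
  have h1 : (n:ℤ) < 2 ^ (n+1) := by
    have := Nat.lt_two_pow_self (n := n+1)
    have h2 : n < 2 ^ (n+1) := lt_of_le_of_lt (Nat.le_succ n) this
    exact_mod_cast h2
  have h2 : (2:ℤ) ^ (n+1) ≤ c ^ (n+1) := pow_le_pow_left₀ (by norm_num) (by omega) _
  linarith

include hc hV h0 in
lemma ball_ncard_le (n : ℕ) :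
    (ballSet (⋃ j, stage c V j) n).ncard ≤ V.ncard ^ (Nat.log c.toNat n + 1) := by
  have hcn : 1 < c.toNat := by omega
  have h1 : n < c.toNat ^ (Nat.log c.toNat n + 1) := Nat.lt_pow_succ_log_self hcn n
  have hcc : ((c.toNat : ℤ)) = c := Int.toNat_of_nonneg (by omega)
  have h2 : (n : ℤ) < c ^ (Nat.log c.toNat n + 1) := by
    have := Int.ofNat_lt.mpr h1
    push_cast at this
    rwa [hcc] at this
  calc (ballSet (⋃ j, stage c V j) n).ncard
      ≤ (stage c V (Nat.log c.toNat n + 1)).ncard :=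
        Set.ncard_le_ncard (ball_subset_stage c V hc hV h2) (stage_finite c V hV h0 _)
    _ = V.ncard ^ (Nat.log c.toNat n + 1) := stage_ncard c V hc hV h0 _

include hc hV h0 in
lemma le_ball_ncard (n : ℕ) (hn : 1 ≤ n) :
    V.ncard ^ (Nat.log c.toNat n - 1) ≤ (ballSet (⋃ j, stage c V j) n).ncard := by
  have hcc : ((c.toNat : ℤ)) = c := Int.toNat_of_nonneg (by omega)
  set k := Nat.log c.toNat n with hk
  have h2 : 2 * c ^ (k - 1) ≤ (n : ℤ) + 2 := by
    rcases Nat.eq_zero_or_pos k with h | h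
    · rw [h]; simp
    · have h3 : c.toNat ^ k ≤ n := Nat.pow_log_le_self c.toNat (by omega)
      have h4 : (c : ℤ) ^ k ≤ (n : ℤ) := by
        have := Int.ofNat_le.mpr h3
        push_cast at this
        rwa [hcc] at this
      have h5 : c ^ k = c ^ (k - 1) * c := by
        rw [← pow_succ]
        congr 1
        omega
      have hpow : (0:ℤ) < c ^ (k-1) := pow_pos (by omega) _
      nlinarith
  calc V.ncard ^ (k - 1) = (stage c V (k-1)).ncard := (stage_ncard c V hc hV h0 _).symm
    _ ≤ (ballSet (⋃ j, stage c V j) n).ncard :=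
        Set.ncard_le_ncard (stage_subset_ball c V hc hV h2) (ball_finite c V hc hV h0 n)

end

/-- The zeta-dimension of a `c`-discrete self-similar fractal generated by `V`
equals `log|V| / log c`. -/
theorem zetaDim_fractal (c : ℤ) (hc : 1 < c) (V : Set (ℤ × ℤ))
    (hV : V ⊆ Set.Icc (0 : ℤ) (c - 1) ×ˢ Set.Icc (0 : ℤ) (c - 1))
    (h0 : ((0, 0) : ℤ × ℤ) ∈ V) (hcard : 2 ≤ V.ncard) :
    zetaDim (⋃ i, stage c V i) = Real.logb 2 V.ncard / Real.logb 2 c := by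
  have hm1 : (1:ℝ) < (V.ncard : ℝ) := by exact_mod_cast Nat.lt_of_lt_of_le one_lt_two hcard
  have hLm : 0 < Real.logb 2 (V.ncard : ℝ) := Real.logb_pos one_lt_two hm1
  have hc2 : (1:ℝ) < (c:ℝ) := by exact_mod_cast hc
  have hLc : 0 < Real.logb 2 (c:ℝ) := Real.logb_pos one_lt_two hc2
  have hcc : ((c.toNat : ℤ)) = c := Int.toNat_of_nonneg (by omega)
  have hccR : ((c.toNat : ℕ) : ℝ) = (c : ℝ) := by exact_mod_cast congrArg (Int.cast : ℤ → ℝ) hcc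
  set Lm := Real.logb 2 (V.ncard : ℝ) with hLmdef
  set Lc := Real.logb 2 (c : ℝ) with hLcdef
  set L := Lm / Lc with hLdef
  have key : Filter.Tendsto
      (fun n : ℕ => Real.logb 2 ((ballSet (⋃ i, stage c V i) n).ncard) / Real.logb 2 n)
      atTop (nhds L) := by
    have hT : Filter.Tendsto (fun n : ℕ => Real.logb 2 (n:ℝ)) atTop atTop :=
      (Real.tendsto_logb_atTop one_lt_two).comp tendsto_natCast_atTop_atTop
    have hz : Filter.Tendsto (fun n : ℕ => Lm / Real.logb 2 (n:ℝ)) atTop (nhds 0) :=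
      Filter.Tendsto.div_atTop tendsto_const_nhds hT
    refine tendsto_of_tendsto_of_tendsto_of_le_of_le'
      (g := fun n : ℕ => L - 2 * (Lm / Real.logb 2 (n:ℝ)))
      (h := fun n : ℕ => L + Lm / Real.logb 2 (n:ℝ)) ?_ ?_ ?_ ?_
    · have h1 : Filter.Tendsto (fun _ : ℕ => L) atTop (nhds L) := tendsto_const_nhds
      simpa using h1.sub (hz.const_mul 2)
    · have h1 : Filter.Tendsto (fun _ : ℕ => L) atTop (nhds L) := tendsto_const_nhds
      simpa using h1.add hz
    · -- lower bound
      filter_upwards [eventually_ge_atTop 2] with n hn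
      set k := Nat.log c.toNat n with hk
      set N := (ballSet (⋃ i, stage c V i) n).ncard with hN
      set T := Real.logb 2 (n:ℝ) with hTdef
      have hn0 : (0:ℝ) < (n:ℝ) := by exact_mod_cast (by omega : 0 < n)
      have hT0 : 0 < T := Real.logb_pos one_lt_two (by exact_mod_cast hn)
      have hN1 : 1 ≤ N := by
        rw [hN]
        refine (Set.ncard_pos (ball_finite c V hc hV h0 n)).mpr ?_
        exact ⟨((0:ℤ),(0:ℤ)), Set.mem_iUnion.mpr ⟨0, rfl⟩, by simp⟩
      have hNR : (1:ℝ) ≤ (N:ℝ) := by exact_mod_cast hN1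
      have hmR : (0:ℝ) < (V.ncard:ℝ) := by linarith
      have hNR0 : (0:ℝ) < (N:ℝ) := by linarith
      -- A2 : T ≤ (k+1) * Lc
      have A2 : T ≤ ((k:ℝ)+1) * Lc := by
        have h1 : n < c.toNat ^ (k + 1) := Nat.lt_pow_succ_log_self (by omega) n
        have h1' : (n:ℝ) ≤ ((c.toNat : ℕ):ℝ) ^ (k+1) := by exact_mod_cast h1.le
        have h2 := (Real.logb_le_logb one_lt_two hn0 (by rw [hccR]; positivity)).mpr h1'
        rw [Real.logb_pow, hccR] at h2
        push_cast at h2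
        exact h2
      -- B1 : (k-1 : ℕ) * Lm ≤ logb 2 N
      have B1 : (((k-1 : ℕ)):ℝ) * Lm ≤ Real.logb 2 (N:ℝ) := by
        have h1 : V.ncard ^ (k - 1) ≤ N := le_ball_ncard c V hc hV h0 n (by omega)
        have h1' : ((V.ncard:ℝ)) ^ (k-1) ≤ (N:ℝ) := by exact_mod_cast h1
        have h2 := (Real.logb_le_logb one_lt_two (by positivity) hNR0).mpr h1'
        rwa [Real.logb_pow] at h2
      have hcast : (k:ℝ) - 1 ≤ (((k-1:ℕ)):ℝ) := by
        rcases Nat.eq_zero_or_pos k with h | h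
        · rw [h]; norm_num
        · rw [Nat.cast_sub h]; norm_num
      rw [le_div_iff₀ hT0]
      have s1 : (L - 2 * (Lm / T)) * T = L * T - 2 * Lm := by
        have e : Lm / T * T = Lm := div_mul_cancel₀ Lm hT0.ne'
        calc (L - 2 * (Lm / T)) * T = L * T - 2 * (Lm / T * T) := by ring
          _ = L * T - 2 * Lm := by rw [e]
      have s2 : L * T ≤ ((k:ℝ)+1) * Lm := by
        have h1 := mul_le_mul_of_nonneg_left A2 (div_nonneg hLm.le hLc.le)
        calc L * T ≤ Lm / Lc * (((k:ℝ)+1) * Lc) := h1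
          _ = ((k:ℝ)+1) * Lm := by field_simp
      have s3 : ((k:ℝ) - 1) * Lm ≤ Real.logb 2 (N:ℝ) :=
        le_trans (mul_le_mul_of_nonneg_right hcast hLm.le) B1
      rw [s1]
      linarith
    · -- upper bound
      filter_upwards [eventually_ge_atTop 2] with n hn
      set k := Nat.log c.toNat n with hk
      set N := (ballSet (⋃ i, stage c V i) n).ncard with hN
      set T := Real.logb 2 (n:ℝ) with hTdef
      have hn0 : (0:ℝ) < (n:ℝ) := by exact_mod_cast (by omega : 0 < n)
      have hT0 : 0 < T := Real.logb_pos one_lt_two (by exact_mod_cast hn)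
      have hN1 : 1 ≤ N := by
        rw [hN]
        refine (Set.ncard_pos (ball_finite c V hc hV h0 n)).mpr ?_
        exact ⟨((0:ℤ),(0:ℤ)), Set.mem_iUnion.mpr ⟨0, rfl⟩, by simp⟩
      have hNR : (1:ℝ) ≤ (N:ℝ) := by exact_mod_cast hN1
      have hmR : (0:ℝ) < (V.ncard:ℝ) := by linarith
      have hNR0 : (0:ℝ) < (N:ℝ) := by linarith
      have A1 : (k:ℝ) * Lc ≤ T := by
        have h1 : c.toNat ^ k ≤ n := Nat.pow_log_le_self c.toNat (by omega)
        have h1' : ((c.toNat : ℕ):ℝ) ^ k ≤ (n:ℝ) := by exact_mod_cast h1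
        have h2 := (Real.logb_le_logb one_lt_two (by rw [hccR]; positivity) hn0).mpr h1'
        rwa [Real.logb_pow, hccR] at h2
      have B2 : Real.logb 2 (N:ℝ) ≤ ((k:ℝ)+1) * Lm := by
        have h1 : N ≤ V.ncard ^ (k+1) := ball_ncard_le c V hc hV h0 n
        have h1' : (N:ℝ) ≤ ((V.ncard:ℝ)) ^ (k+1) := by exact_mod_cast h1
        have h2 := (Real.logb_le_logb one_lt_two hNR0 (by positivity)).mpr h1'
        rw [Real.logb_pow] at h2
        push_cast at h2
        exact h2
      rw [div_le_iff₀ hT0]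
      have s1 : (L + Lm / T) * T = L * T + Lm := by
        have e : Lm / T * T = Lm := div_mul_cancel₀ Lm hT0.ne'
        calc (L + Lm / T) * T = L * T + Lm / T * T := by ring
          _ = L * T + Lm := by rw [e]
      have s5 : (k:ℝ) * Lm ≤ L * T := by
        have h1 := mul_le_mul_of_nonneg_left A1 (div_nonneg hLm.le hLc.le)
        calc (k:ℝ) * Lm = Lm / Lc * ((k:ℝ) * Lc) := by field_simp
          _ ≤ Lm / Lc * T := h1
      rw [s1]
      linarith
  unfold zetaDim
  exact key.limsup_eq
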